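/- arXiv:1207.1643 — 4 statements merged into one kernel-verified Lean document; each statement's English description precedes it below -/
import Mathlib

section
/- Let dA denote the surface measure on the unit sphere S² ⊂ ℝ³ (with total mass 4π), and let ρ : S² → [0, ∞) be integrable with ∫_{S²} ρ dA = 1. Define Q = ∫_{S²} (p ⊗ p − (1/3)I) ρ(p) dA(p). Then for every unit vector e ∈ ℝ³ one has the strict bounds −1/3 < eᵀQe < 2/3; equivalently, every eigenvalue of Q lies in the open interval (−1/3, 2/3). -/
open MeasureTheory

/-- The surface measure `dA` on the unit sphere `S² ⊂ ℝ³` (of total mass `4π`),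
obtained by disintegrating the Lebesgue measure of `ℝ³` in polar coordinates. -/
noncomputable def sphereSurfaceMeasure :
    Measure (Metric.sphere (0 : EuclideanSpace ℝ (Fin 3)) 1) :=
  (volume : Measure (EuclideanSpace ℝ (Fin 3))).toSphere

/-- A measurable subset of the sphere contained in a proper linear subspace is null
for the surface measure. -/
lemma sphereSurfaceMeasure_null_of_submodule
    (W : Submodule ℝ (EuclideanSpace ℝ (Fin 3))) (hW : W ≠ ⊤)
    (s : Set (Metric.sphere (0 : EuclideanSpace ℝ (Fin 3)) 1)) (hs : MeasurableSet s)
    (hsub : ∀ p ∈ s, ((p : EuclideanSpace ℝ (Fin 3)) ∈ W)) :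
    sphereSurfaceMeasure s = 0 := by
  rw [sphereSurfaceMeasure, (volume : Measure (EuclideanSpace ℝ (Fin 3))).toSphere_apply' hs]
  refine mul_eq_zero_of_right _
    (measure_mono_null ?_ (Measure.addHaar_submodule volume W hW))
  rintro x hx
  obtain ⟨c, hc, y, hy, rfl⟩ := hx
  obtain ⟨p, hp, rfl⟩ := hy
  exact W.smul_mem c (hsub p hp)

/-- If `ρ : S² → [0, ∞)` is integrable with `∫ ρ dA = 1` and
`Q = ∫ (p ⊗ p - (1/3) I) ρ(p) dA(p)`, then for every unit vector `e ∈ ℝ³` one has the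
strict bounds `-1/3 < eᵀ Q e < 2/3` (equivalently, every eigenvalue of `Q` lies in
the open interval `(-1/3, 2/3)`). -/
theorem qTensor_strict_quadratic_form_bounds
    (ρ : Metric.sphere (0 : EuclideanSpace ℝ (Fin 3)) 1 → ℝ)
    (hρint : Integrable ρ sphereSurfaceMeasure)
    (hρ0 : ∀ p, 0 ≤ ρ p)
    (hρ1 : ∫ p, ρ p ∂sphereSurfaceMeasure = 1)
    (Q : Matrix (Fin 3) (Fin 3) ℝ)
    (hQ : ∀ i j, Q i j =
      ∫ p : Metric.sphere (0 : EuclideanSpace ℝ (Fin 3)) 1,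
        ((p : EuclideanSpace ℝ (Fin 3)) i * (p : EuclideanSpace ℝ (Fin 3)) j
          - (1 / 3) * (if i = j then (1 : ℝ) else 0)) * ρ p ∂sphereSurfaceMeasure) :
    ∀ e : EuclideanSpace ℝ (Fin 3), ‖e‖ = 1 →
      -(1 / 3) < ∑ i, ∑ j, e i * Q i j * e j ∧
        ∑ i, ∑ j, e i * Q i j * e j < 2 / 3 := by
  intro e he
  set μ := sphereSurfaceMeasure with hμdef
  have hpnorm : ∀ p : Metric.sphere (0 : EuclideanSpace ℝ (Fin 3)) 1,
      ‖(p : EuclideanSpace ℝ (Fin 3))‖ = 1 := fun p => mem_sphere_zero_iff_norm.mp p.2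
  -- the linear form S p = ⟪e, p⟫
  set S : Metric.sphere (0 : EuclideanSpace ℝ (Fin 3)) 1 → ℝ :=
    fun p => inner ℝ e (p : EuclideanSpace ℝ (Fin 3)) with hSdef
  have hS_sum : ∀ p, S p = ∑ i, e i * (p : EuclideanSpace ℝ (Fin 3)) i := by
    intro p
    simp [hSdef, PiLp.inner_apply, RCLike.inner_apply, conj_trivial, mul_comm]
  have he2 : (∑ i, e i * e i) = 1 := by
    have h := real_inner_self_eq_norm_sq e
    rw [he] at h
    have h2 : (inner ℝ e e : ℝ) = ∑ i, e i * e i := by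
      rw [PiLp.inner_apply]; simp [RCLike.inner_apply, conj_trivial, sq]
    rw [h2] at h
    simpa using h
  have hSb : ∀ p, |S p| ≤ 1 := by
    intro p
    have := abs_real_inner_le_norm e (p : EuclideanSpace ℝ (Fin 3))
    rwa [he, hpnorm p, one_mul] at this
  have hS2 : ∀ p, S p ^ 2 ≤ 1 := fun p => by
    have := hSb p; nlinarith [sq_abs (S p), abs_nonneg (S p)]
  have hpi : ∀ (p : Metric.sphere (0 : EuclideanSpace ℝ (Fin 3)) 1) (i : Fin 3),
      |(p : EuclideanSpace ℝ (Fin 3)) i| ≤ 1 := by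
    intro p i
    have h1 : (inner ℝ (EuclideanSpace.single i (1:ℝ)) (p : EuclideanSpace ℝ (Fin 3)) : ℝ)
        = (p : EuclideanSpace ℝ (Fin 3)) i := by
      simp [EuclideanSpace.inner_single_left]
    have h2 := abs_real_inner_le_norm (EuclideanSpace.single i (1:ℝ))
      (p : EuclideanSpace ℝ (Fin 3))
    rw [h1, hpnorm p, EuclideanSpace.norm_single] at h2
    simpa using h2
  -- measurability of S
  have hSm : Measurable S := by
    have : Measurable fun p : Metric.sphere (0 : EuclideanSpace ℝ (Fin 3)) 1 =>
        (p : EuclideanSpace ℝ (Fin 3)) := measurable_subtype_coe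
    rw [show S = fun p : Metric.sphere (0 : EuclideanSpace ℝ (Fin 3)) 1 =>
        ∑ i, e i * (p : EuclideanSpace ℝ (Fin 3)) i from funext hS_sum]
    exact Finset.measurable_sum _ fun i _ =>
      (measurable_const.mul ((PiLp.continuous_apply 2 _ i).measurable.comp this))
  -- integrand of Q
  set F : Fin 3 → Fin 3 → Metric.sphere (0 : EuclideanSpace ℝ (Fin 3)) 1 → ℝ :=
    fun i j p => ((p : EuclideanSpace ℝ (Fin 3)) i * (p : EuclideanSpace ℝ (Fin 3)) j
      - (1 / 3) * (if i = j then (1 : ℝ) else 0)) * ρ p with hFdef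
  have hFint : ∀ i j, Integrable (F i j) μ := by
    intro i j
    refine hρint.bdd_mul ?_ (c := 2) (Filter.Eventually.of_forall fun p => ?_)
    · refine (Measurable.sub ?_ measurable_const).aestronglyMeasurable
      exact (show Measurable fun p : Metric.sphere (0 : EuclideanSpace ℝ (Fin 3)) 1 =>
          (p : EuclideanSpace ℝ (Fin 3)) i from
          (PiLp.continuous_apply 2 (fun _ : Fin 3 => ℝ) i).measurable.comp measurable_subtype_coe).mul
        (show Measurable fun p : Metric.sphere (0 : EuclideanSpace ℝ (Fin 3)) 1 =>
          (p : EuclideanSpace ℝ (Fin 3)) j from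
          (PiLp.continuous_apply 2 (fun _ : Fin 3 => ℝ) j).measurable.comp measurable_subtype_coe)
    · have h1 := hpi p i; have h2 := hpi p j
      rw [Real.norm_eq_abs]
      have hm : |(p : EuclideanSpace ℝ (Fin 3)) i * (p : EuclideanSpace ℝ (Fin 3)) j| ≤ 1 := by
        rw [abs_mul]; nlinarith [abs_nonneg ((p : EuclideanSpace ℝ (Fin 3)) i)]
      have hd : |(1:ℝ)/3 * (if i = j then (1:ℝ) else 0)| ≤ 1/3 := by
        rcases eq_or_ne i j with h | h
        · rw [if_pos h, mul_one, abs_of_nonneg (by norm_num : (0:ℝ) ≤ 1/3)]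
        · rw [if_neg h, mul_zero, abs_zero]; norm_num
      have htri := abs_sub ((p : EuclideanSpace ℝ (Fin 3)) i * (p : EuclideanSpace ℝ (Fin 3)) j)
        ((1:ℝ)/3 * (if i = j then (1:ℝ) else 0))
      linarith
  have hGint : Integrable (fun p => S p ^ 2 * ρ p) μ := by
    refine hρint.bdd_mul ((hSm.pow_const 2).aestronglyMeasurable) (c := 1) (Filter.Eventually.of_forall fun p => ?_)
    rw [Real.norm_eq_abs, abs_of_nonneg (sq_nonneg _)]
    exact hS2 p
  have hJint : Integrable (fun p => (1 - S p ^ 2) * ρ p) μ := by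
    refine hρint.bdd_mul ((measurable_const.sub (hSm.pow_const 2)).aestronglyMeasurable)
      (c := 1) (Filter.Eventually.of_forall fun p => ?_)
    rw [Real.norm_eq_abs, abs_of_nonneg (by linarith [hS2 p])]
    nlinarith [sq_nonneg (S p)]
  -- key identity
  have key : (∑ i, ∑ j, e i * Q i j * e j) = ∫ p, (S p ^ 2 - 1/3) * ρ p ∂μ := by
    have h1 : ∀ i j, e i * Q i j * e j = ∫ p, e i * F i j p * e j ∂μ := by
      intro i j
      rw [hQ i j, ← integral_const_mul, ← integral_mul_const]
    have h2 : ∀ i, (∑ j, ∫ p, e i * F i j p * e j ∂μ)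
        = ∫ p, ∑ j, e i * F i j p * e j ∂μ := fun i =>
      (integral_finset_sum _ fun j _ => (((hFint i j).const_mul (e i)).mul_const (e j))).symm
    have h3 : (∑ i, ∫ p, ∑ j, e i * F i j p * e j ∂μ)
        = ∫ p, ∑ i, ∑ j, e i * F i j p * e j ∂μ :=
      (integral_finset_sum _ fun i _ => integrable_finset_sum _
        fun j _ => (((hFint i j).const_mul (e i)).mul_const (e j))).symm
    simp_rw [h1, h2]
    rw [h3]
    refine integral_congr_ae (Filter.Eventually.of_forall fun p => ?_)
    have hs := hS_sum p
    simp only [hFdef]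
    rw [show (S p ^ 2 - 1/3) * ρ p
        = (∑ i, e i * (p : EuclideanSpace ℝ (Fin 3)) i) ^ 2 * ρ p
          - (1/3) * (∑ i, e i * e i) * ρ p by rw [← hs, he2]; ring]
    simp only [Fin.sum_univ_three]
    norm_num [Fin.ext_iff]
    ring
  have hsplit : (∫ p, (S p ^ 2 - 1/3) * ρ p ∂μ)
      = (∫ p, S p ^ 2 * ρ p ∂μ) - 1/3 := by
    have hpt : ∀ p, (S p ^ 2 - 1/3) * ρ p = S p ^ 2 * ρ p - (1/3) * ρ p := fun p => by ring
    simp_rw [hpt]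
    rw [integral_sub hGint (hρint.const_mul _), integral_const_mul, hρ1, mul_one]
  set I := ∫ p, S p ^ 2 * ρ p ∂μ with hIdef
  -- a.e. positivity tools
  have hρ_not_ae_zero : ¬ (ρ =ᵐ[μ] 0) := by
    intro h
    have h0 : (1:ℝ) = 0 := by rw [← hρ1, integral_congr_ae h]; simp
    norm_num at h0
  -- strict lower bound : 0 < I
  have hIpos : 0 < I := by
    rcases (integral_nonneg fun p => mul_nonneg (sq_nonneg _) (hρ0 p) :
        (0:ℝ) ≤ I).lt_or_eq with h | h
    · exact h
    exfalso
    have hae : (fun p => S p ^ 2 * ρ p) =ᵐ[μ] 0 :=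
      (integral_eq_zero_iff_of_nonneg (fun p => mul_nonneg (sq_nonneg _) (hρ0 p)) hGint).mp h.symm
    have hN : μ {p | S p = 0} = 0 := by
      refine sphereSurfaceMeasure_null_of_submodule ((Submodule.span ℝ {e})ᗮ) ?_ _
        (hSm (measurableSet_singleton 0)) ?_
      · intro htop
        have hmem : e ∈ (Submodule.span ℝ {e})ᗮ := htop ▸ Submodule.mem_top
        have : (inner ℝ e e : ℝ) = 0 :=
          Submodule.mem_orthogonal_singleton_iff_inner_right.mp hmem
        rw [real_inner_self_eq_norm_sq, he] at this
        norm_num at this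
      · intro p hp
        exact Submodule.mem_orthogonal_singleton_iff_inner_right.mpr hp
    have hne : ∀ᵐ p ∂μ, S p ≠ 0 := by
      rw [ae_iff]
      have : {p | ¬ S p ≠ 0} = {p | S p = 0} := by ext p; simp
      rw [this]; exact hN
    have : ρ =ᵐ[μ] 0 := by
      filter_upwards [hae, hne] with p h1 h2
      have h1' : S p ^ 2 * ρ p = 0 := h1
      rcases mul_eq_zero.mp h1' with h | h
      · exact absurd ((pow_eq_zero_iff two_ne_zero).mp h) h2
      · exact h
    exact hρ_not_ae_zero this
  -- strict upper bound : I < 1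
  have hIlt : I < 1 := by
    set J := ∫ p, (1 - S p ^ 2) * ρ p ∂μ with hJdef
    have hJeq : J = 1 - I := by
      have hpt : ∀ p, (1 - S p ^ 2) * ρ p = ρ p - S p ^ 2 * ρ p := fun p => by ring
      rw [hJdef]
      simp_rw [hpt]
      rw [integral_sub hρint hGint, hρ1, hIdef]
    have hJnn : ∀ p, 0 ≤ (1 - S p ^ 2) * ρ p :=
      fun p => mul_nonneg (by linarith [hS2 p]) (hρ0 p)
    rcases (integral_nonneg hJnn : (0:ℝ) ≤ J).lt_or_eq with h | h
    · linarith
    exfalso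
    have hae : (fun p => (1 - S p ^ 2) * ρ p) =ᵐ[μ] 0 :=
      (integral_eq_zero_iff_of_nonneg hJnn hJint).mp h.symm
    have hsubM : ∀ p : Metric.sphere (0 : EuclideanSpace ℝ (Fin 3)) 1,
        S p ^ 2 = 1 → (p : EuclideanSpace ℝ (Fin 3)) ∈ Submodule.span ℝ {e} := by
      intro p hsq
      have hfac : (S p - 1) * (S p + 1) = 0 := by linear_combination hsq
      have habs : |S p| = 1 := by
        rcases mul_eq_zero.mp hfac with h' | h'
        · have : S p = 1 := by linarith
          simp [this]
        · have : S p = -1 := by linarith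
          simp [this]
      have hnorm : ‖(inner ℝ e (p : EuclideanSpace ℝ (Fin 3)) : ℝ)‖
          = ‖e‖ * ‖(p : EuclideanSpace ℝ (Fin 3))‖ := by
        rw [Real.norm_eq_abs, he, hpnorm p, one_mul]
        exact habs
      have hene : e ≠ 0 := fun h' => by simp [h'] at he
      have hpne : (p : EuclideanSpace ℝ (Fin 3)) ≠ 0 := fun h' => by
        have := hpnorm p; rw [h'] at this; simp at this
      obtain ⟨r, -, hr⟩ := (norm_inner_eq_norm_iff hene hpne).mp hnorm
      exact Submodule.mem_span_singleton.mpr ⟨r, hr.symm⟩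
    have hM : μ {p | S p ^ 2 = 1} = 0 := by
      refine sphereSurfaceMeasure_null_of_submodule (Submodule.span ℝ {e}) ?_ _
        ((hSm.pow_const 2) (measurableSet_singleton 1)) hsubM
      intro htop
      have hene : e ≠ 0 := fun h' => by simp [h'] at he
      have h1 : Module.finrank ℝ (Submodule.span ℝ {e}) = 1 :=
        finrank_span_singleton hene
      rw [htop, finrank_top] at h1
      rw [finrank_euclideanSpace_fin] at h1
      norm_num at h1
    have hne : ∀ᵐ p ∂μ, S p ^ 2 ≠ 1 := by
      rw [ae_iff]
      have : {p | ¬ S p ^ 2 ≠ 1} = {p | S p ^ 2 = 1} := by ext p; simp only [Set.mem_setOf_eq, ne_eq, not_not]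
      rw [this]; exact hM
    have : ρ =ᵐ[μ] 0 := by
      filter_upwards [hae, hne] with p h1 h2
      have h1' : (1 - S p ^ 2) * ρ p = 0 := h1
      rcases mul_eq_zero.mp h1' with h' | h'
      · exact absurd (by linarith : S p ^ 2 = 1) h2
      · exact h'
    exact hρ_not_ae_zero this
  rw [key, hsplit]
  constructor <;> linarith
end

section
/- Define the Ball–Majumdar potential f on symmetric traceless 3×3 matrices by f(Q) = inf { ∫_{S²} ρ(p) log ρ(p) dA(p) : ρ ∈ A_Q }, where A_Q = { ρ : S² → [0,∞) integrable with ∫_{S²} ρ dA = 1 and ∫_{S²} (p ⊗ p − (1/3)I) ρ(p) dA(p) = Q }, with the convention that the infimum over the empty set is +∞. Then f is convex: for all symmetric traceless Q₁, Q₂ and all t ∈ [0,1], f(t Q₁ + (1−t) Q₂) ≤ t f(Q₁) + (1−t) f(Q₂) in the extended reals. -/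
open MeasureTheory

attribute [local instance] Classical.propDecidable

/-- The entropy `∫ ρ log ρ dA`, as an extended real number.  For integrable `ρ ≥ 0`
with `∫ ρ dA = 1` the negative part of `ρ log ρ` is always integrable (since
`x log x ≥ -1/e`), so the integral is well defined with values in `(-∞, +∞]`:
it is `+∞` exactly when `ρ log ρ` fails to be (Bochner) integrable. -/
noncomputable def sphereEntropy
    (ρ : Metric.sphere (0 : EuclideanSpace ℝ (Fin 3)) 1 → ℝ) : EReal :=
  if Integrable (fun p => ρ p * Real.log (ρ p)) sphereSurfaceMeasure then
    ((∫ p, ρ p * Real.log (ρ p) ∂sphereSurfaceMeasure : ℝ) : EReal)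
  else ⊤

/-- The admissible class `A_Q`: integrable probability densities `ρ ≥ 0` on the sphere
whose normalized second moment tensor `∫ (p ⊗ p - (1/3)I) ρ dA` equals `Q`. -/
def admissibleDensities (Q : Matrix (Fin 3) (Fin 3) ℝ) :
    Set (Metric.sphere (0 : EuclideanSpace ℝ (Fin 3)) 1 → ℝ) :=
  {ρ | Integrable ρ sphereSurfaceMeasure ∧ (∀ p, 0 ≤ ρ p) ∧
    (∫ p, ρ p ∂sphereSurfaceMeasure) = 1 ∧
    ∀ i j, Q i j =
      ∫ p : Metric.sphere (0 : EuclideanSpace ℝ (Fin 3)) 1,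
        ((p : EuclideanSpace ℝ (Fin 3)) i * (p : EuclideanSpace ℝ (Fin 3)) j
          - (1 / 3) * (if i = j then (1 : ℝ) else 0)) * ρ p ∂sphereSurfaceMeasure}

/-- The Ball–Majumdar singular bulk potential
`f(Q) = inf { ∫ ρ log ρ dA : ρ ∈ A_Q }`, with values in the extended reals
(the infimum over the empty set being `+∞`). -/
noncomputable def ballMajumdarPotential (Q : Matrix (Fin 3) (Fin 3) ℝ) : EReal :=
  sInf (sphereEntropy '' admissibleDensities Q)

section Aux

open Metric Real

local notation "Sph" => Metric.sphere (0 : EuclideanSpace ℝ (Fin 3)) 1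
local notation "μS" => sphereSurfaceMeasure

instance : IsFiniteMeasure sphereSurfaceMeasure := by
  unfold sphereSurfaceMeasure; infer_instance

/-- `x log x ≥ -e⁻¹` for `x ≥ 0`. -/
lemma mul_log_ge_neg_exp {x : ℝ} (hx : 0 ≤ x) : -Real.exp (-1) ≤ x * Real.log x := by
  rcases hx.eq_or_lt with h | h
  · simp [← h]
    positivity
  · have hlog : Real.log x⁻¹ ≤ x⁻¹ * Real.exp (-1) := by
      have h1 : (0:ℝ) < x⁻¹ / Real.exp 1 := by positivity
      have := Real.log_le_sub_one_of_pos h1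
      rw [Real.log_div (by positivity) (Real.exp_ne_zero 1), Real.log_exp] at this
      have hle : x⁻¹ / Real.exp 1 ≤ x⁻¹ * Real.exp (-1) := by
        rw [Real.exp_neg, div_eq_mul_inv]
      linarith
    have := mul_le_mul_of_nonneg_left hlog h.le
    rw [Real.log_inv] at this
    have hxinv : x * (x⁻¹ * Real.exp (-1)) = Real.exp (-1) := by
      field_simp
    rw [mul_neg] at this
    nlinarith [this]

/-- Every entropy of a nonnegative density is bounded below by a fixed real constant. -/
lemma sphereEntropy_ge (ρ : Sph → ℝ) (hρ : ∀ p, 0 ≤ ρ p) :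
    ((-((μS Set.univ).toReal * Real.exp (-1)) : ℝ) : EReal) ≤ sphereEntropy ρ := by
  unfold sphereEntropy
  split_ifs with h
  · rw [EReal.coe_le_coe_iff]
    have : ∫ p, (-Real.exp (-1)) ∂μS ≤ ∫ p, ρ p * Real.log (ρ p) ∂μS :=
      integral_mono (integrable_const _) h (fun p => mul_log_ge_neg_exp (hρ p))
    rw [integral_const, smul_eq_mul] at this
    simp only [Measure.real] at this
    linarith
  · exact le_top

lemma ballMajumdarPotential_ne_bot (Q : Matrix (Fin 3) (Fin 3) ℝ) :
    ballMajumdarPotential Q ≠ ⊥ := by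
  have : ((-((μS Set.univ).toReal * Real.exp (-1)) : ℝ) : EReal) ≤ ballMajumdarPotential Q := by
    apply le_sInf
    rintro x ⟨ρ, hρ, rfl⟩
    exact sphereEntropy_ge ρ hρ.2.1
  intro hbot
  rw [hbot] at this
  exact (EReal.coe_ne_bot _) (le_bot_iff.mp this)

end Aux
section Aux2

local notation "Sph" => Metric.sphere (0 : EuclideanSpace ℝ (Fin 3)) 1
local notation "μS" => sphereSurfaceMeasure

lemma abs_coord_le_one (p : Sph) (i : Fin 3) : |(p : EuclideanSpace ℝ (Fin 3)) i| ≤ 1 := by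
  have hn : ‖(p : EuclideanSpace ℝ (Fin 3))‖ = 1 := by
    have := p.2
    rwa [mem_sphere_zero_iff_norm] at this
  have : |(p : EuclideanSpace ℝ (Fin 3)) i| ≤ ‖(p : EuclideanSpace ℝ (Fin 3))‖ := by
    rw [EuclideanSpace.norm_eq]
    rw [show |(p : EuclideanSpace ℝ (Fin 3)) i| = Real.sqrt (‖(p : EuclideanSpace ℝ (Fin 3)) i‖^2) by
      rw [Real.sqrt_sq_eq_abs]; simp]
    apply Real.sqrt_le_sqrt
    exact Finset.single_le_sum (f := fun j => ‖(p : EuclideanSpace ℝ (Fin 3)) j‖^2)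
      (fun j _ => by positivity) (Finset.mem_univ i)
  linarith

/-- The moment kernel. -/
noncomputable def momKer (i j : Fin 3) (p : Sph) : ℝ :=
  (p : EuclideanSpace ℝ (Fin 3)) i * (p : EuclideanSpace ℝ (Fin 3)) j
    - (1 / 3) * (if i = j then (1 : ℝ) else 0)

lemma abs_momKer_le (i j : Fin 3) (p : Sph) : |momKer i j p| ≤ 2 := by
  have h1 := abs_coord_le_one p i
  have h2 := abs_coord_le_one p j
  have : |(p : EuclideanSpace ℝ (Fin 3)) i * (p : EuclideanSpace ℝ (Fin 3)) j| ≤ 1 := by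
    rw [abs_mul]
    nlinarith [abs_nonneg ((p : EuclideanSpace ℝ (Fin 3)) i)]
  unfold momKer
  split_ifs <;> [skip; simp only [mul_zero, sub_zero]] <;>
    cases' abs_le.mp this with hl hr <;> rw [abs_le] <;> constructor <;> linarith

lemma continuous_momKer (i j : Fin 3) : Continuous (momKer i j) := by
  unfold momKer
  fun_prop

lemma integrable_momKer_mul {ρ : Sph → ℝ} (hρ : Integrable ρ μS) (i j : Fin 3) :
    Integrable (fun p => momKer i j p * ρ p) μS := by
  refine (hρ.norm.const_mul 2).mono'
    ((continuous_momKer i j).aestronglyMeasurable.mul hρ.aestronglyMeasurable) ?_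
  filter_upwards with p
  rw [norm_mul]
  have := abs_momKer_le i j p
  have h2 : (0:ℝ) ≤ ‖ρ p‖ := norm_nonneg _
  calc ‖momKer i j p‖ * ‖ρ p‖ ≤ 2 * ‖ρ p‖ := by
        exact mul_le_mul_of_nonneg_right this h2

/-- Admissibility of the convex combination. -/
lemma mix_admissible {Q₁ Q₂ : Matrix (Fin 3) (Fin 3) ℝ} {ρ₁ ρ₂ : Sph → ℝ}
    (h₁ : ρ₁ ∈ admissibleDensities Q₁) (h₂ : ρ₂ ∈ admissibleDensities Q₂)
    {t : ℝ} (ht0 : 0 ≤ t) (ht1 : t ≤ 1) :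
    (fun p => t * ρ₁ p + (1 - t) * ρ₂ p) ∈
      admissibleDensities (t • Q₁ + (1 - t) • Q₂) := by
  obtain ⟨hi₁, hn₁, hm₁, hQ₁⟩ := h₁
  obtain ⟨hi₂, hn₂, hm₂, hQ₂⟩ := h₂
  refine ⟨(hi₁.const_mul t).add (hi₂.const_mul (1 - t)), ?_, ?_, ?_⟩
  · intro p
    exact add_nonneg (mul_nonneg ht0 (hn₁ p)) (mul_nonneg (by linarith) (hn₂ p))
  · rw [integral_add (hi₁.const_mul t) (hi₂.const_mul (1 - t)),
      integral_const_mul, integral_const_mul, hm₁, hm₂]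
    ring
  · intro i j
    have key : ∀ p : Sph, momKer i j p * (t * ρ₁ p + (1 - t) * ρ₂ p)
        = t * (momKer i j p * ρ₁ p) + (1 - t) * (momKer i j p * ρ₂ p) := fun p => by ring
    have : (∫ p, momKer i j p * (t * ρ₁ p + (1 - t) * ρ₂ p) ∂μS)
        = t * (∫ p, momKer i j p * ρ₁ p ∂μS) + (1 - t) * (∫ p, momKer i j p * ρ₂ p ∂μS) := by
      simp_rw [key]
      rw [integral_add ((integrable_momKer_mul hi₁ i j).const_mul t)
        ((integrable_momKer_mul hi₂ i j).const_mul (1 - t)),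
        integral_const_mul, integral_const_mul]
    show (t • Q₁ + (1 - t) • Q₂) i j = ∫ p, momKer i j p * (t * ρ₁ p + (1 - t) * ρ₂ p) ∂μS
    rw [this, Matrix.add_apply, Matrix.smul_apply, Matrix.smul_apply, smul_eq_mul, smul_eq_mul,
      hQ₁ i j, hQ₂ i j]
    rfl

end Aux2
section Aux3

local notation "Sph" => Metric.sphere (0 : EuclideanSpace ℝ (Fin 3)) 1
local notation "μS" => sphereSurfaceMeasure

lemma mix_entropy {ρ₁ ρ₂ : Sph → ℝ} (hn₁ : ∀ p, 0 ≤ ρ₁ p) (hn₂ : ∀ p, 0 ≤ ρ₂ p)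
    (hi₁ : Integrable ρ₁ μS) (hi₂ : Integrable ρ₂ μS)
    (hI₁ : Integrable (fun p => ρ₁ p * Real.log (ρ₁ p)) μS)
    (hI₂ : Integrable (fun p => ρ₂ p * Real.log (ρ₂ p)) μS)
    {t : ℝ} (ht0 : 0 ≤ t) (ht1 : t ≤ 1) :
    Integrable (fun p => (t * ρ₁ p + (1 - t) * ρ₂ p)
        * Real.log (t * ρ₁ p + (1 - t) * ρ₂ p)) μS ∧
    (∫ p, (t * ρ₁ p + (1 - t) * ρ₂ p) * Real.log (t * ρ₁ p + (1 - t) * ρ₂ p) ∂μS)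
      ≤ t * (∫ p, ρ₁ p * Real.log (ρ₁ p) ∂μS)
        + (1 - t) * (∫ p, ρ₂ p * Real.log (ρ₂ p) ∂μS) := by
  have ht1' : 0 ≤ 1 - t := by linarith
  have hconv : ∀ p : Sph,
      (t * ρ₁ p + (1 - t) * ρ₂ p) * Real.log (t * ρ₁ p + (1 - t) * ρ₂ p)
        ≤ t * (ρ₁ p * Real.log (ρ₁ p)) + (1 - t) * (ρ₂ p * Real.log (ρ₂ p)) := fun p => by
    have := Real.convexOn_mul_log.2 (Set.mem_Ici.2 (hn₁ p)) (Set.mem_Ici.2 (hn₂ p))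
      ht0 ht1' (by ring)
    simpa [smul_eq_mul] using this
  have hlb : ∀ p : Sph, -Real.exp (-1)
      ≤ (t * ρ₁ p + (1 - t) * ρ₂ p) * Real.log (t * ρ₁ p + (1 - t) * ρ₂ p) := fun p =>
    mul_log_ge_neg_exp (by nlinarith [hn₁ p, hn₂ p])
  have hIdom : Integrable (fun p => t * (ρ₁ p * Real.log (ρ₁ p))
      + (1 - t) * (ρ₂ p * Real.log (ρ₂ p)) + 2 * Real.exp (-1)) μS :=
    ((hI₁.const_mul t).add (hI₂.const_mul (1 - t))).add (integrable_const _)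
  have hlb1 : ∀ p : Sph, -Real.exp (-1) ≤ ρ₁ p * Real.log (ρ₁ p) := fun p =>
    mul_log_ge_neg_exp (hn₁ p)
  have hlb2 : ∀ p : Sph, -Real.exp (-1) ≤ ρ₂ p * Real.log (ρ₂ p) := fun p =>
    mul_log_ge_neg_exp (hn₂ p)
  have hmeas : AEStronglyMeasurable (fun p => (t * ρ₁ p + (1 - t) * ρ₂ p)
      * Real.log (t * ρ₁ p + (1 - t) * ρ₂ p)) μS := by
    exact Real.continuous_mul_log.comp_aestronglyMeasurable
      ((hi₁.aestronglyMeasurable.const_mul t).add (hi₂.aestronglyMeasurable.const_mul (1 - t)))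
  have hInt : Integrable (fun p => (t * ρ₁ p + (1 - t) * ρ₂ p)
      * Real.log (t * ρ₁ p + (1 - t) * ρ₂ p)) μS := by
    refine hIdom.mono' hmeas ?_
    filter_upwards with p
    rw [Real.norm_eq_abs, abs_le]
    have h1 := mul_le_mul_of_nonneg_left (hlb1 p) ht0
    have h2 := mul_le_mul_of_nonneg_left (hlb2 p) ht1'
    have h3 := hconv p
    have h4 := hlb p
    have he : 0 < Real.exp (-1) := Real.exp_pos _
    constructor <;> nlinarith
  refine ⟨hInt, ?_⟩
  calc (∫ p, (t * ρ₁ p + (1 - t) * ρ₂ p) * Real.log (t * ρ₁ p + (1 - t) * ρ₂ p) ∂μS)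
      ≤ ∫ p, t * (ρ₁ p * Real.log (ρ₁ p)) + (1 - t) * (ρ₂ p * Real.log (ρ₂ p)) ∂μS :=
        integral_mono hInt ((hI₁.const_mul t).add (hI₂.const_mul (1 - t))) hconv
    _ = t * (∫ p, ρ₁ p * Real.log (ρ₁ p) ∂μS) + (1 - t) * (∫ p, ρ₂ p * Real.log (ρ₂ p) ∂μS) := by
        rw [integral_add (hI₁.const_mul t) (hI₂.const_mul (1 - t)),
          integral_const_mul, integral_const_mul]

/-- Key step: the potential at the mixture is bounded by the convex combination of
finite entropies of given admissible densities. -/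
lemma potential_mix_le {Q₁ Q₂ : Matrix (Fin 3) (Fin 3) ℝ} {ρ₁ ρ₂ : Sph → ℝ}
    (h₁ : ρ₁ ∈ admissibleDensities Q₁) (h₂ : ρ₂ ∈ admissibleDensities Q₂)
    (hI₁ : Integrable (fun p => ρ₁ p * Real.log (ρ₁ p)) μS)
    (hI₂ : Integrable (fun p => ρ₂ p * Real.log (ρ₂ p)) μS)
    {t : ℝ} (ht0 : 0 ≤ t) (ht1 : t ≤ 1) :
    ballMajumdarPotential (t • Q₁ + (1 - t) • Q₂)
      ≤ ((t * (∫ p, ρ₁ p * Real.log (ρ₁ p) ∂μS)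
          + (1 - t) * (∫ p, ρ₂ p * Real.log (ρ₂ p) ∂μS) : ℝ) : EReal) := by
  obtain ⟨hInt, hle⟩ := mix_entropy h₁.2.1 h₂.2.1 h₁.1 h₂.1 hI₁ hI₂ ht0 ht1
  have hmem := mix_admissible h₁ h₂ ht0 ht1
  have h1 : ballMajumdarPotential (t • Q₁ + (1 - t) • Q₂)
      ≤ sphereEntropy (fun p => t * ρ₁ p + (1 - t) * ρ₂ p) :=
    sInf_le ⟨_, hmem, rfl⟩
  refine h1.trans ?_
  unfold sphereEntropy
  rw [if_pos hInt]
  exact_mod_cast EReal.coe_le_coe_iff.2 hle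

end Aux3
section Aux4

lemma EReal_le_of_forall_add (x : EReal) (d : ℝ)
    (h : ∀ ε : ℝ, 0 < ε → x ≤ ((d + ε : ℝ) : EReal)) : x ≤ (d : EReal) := by
  induction x using EReal.rec with
  | bot => exact bot_le
  | coe c =>
    rw [EReal.coe_le_coe_iff]
    by_contra hc
    push_neg at hc
    have := h ((c - d) / 2) (by linarith)
    rw [EReal.coe_le_coe_iff] at this
    linarith
  | top =>
    have := h 1 one_pos
    exact absurd this (not_le.2 (EReal.coe_lt_top _))

lemma EReal_pos_mul_ne_bot {s : ℝ} (hs : 0 < s) {x : EReal} (hx : x ≠ ⊥) :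
    (s : EReal) * x ≠ ⊥ := by
  induction x using EReal.rec with
  | bot => exact absurd rfl hx
  | coe c => rw [← EReal.coe_mul]; exact EReal.coe_ne_bot _
  | top => rw [EReal.coe_mul_top_of_pos hs]; exact top_ne_bot

end Aux4
/-- The Ball–Majumdar potential `f` is convex on symmetric traceless
`3×3` matrices: for all such `Q₁, Q₂` and `t ∈ [0,1]`,
`f(t Q₁ + (1-t) Q₂) ≤ t f(Q₁) + (1-t) f(Q₂)` in the extended reals. -/
theorem ballMajumdarPotential_convex
    (Q₁ Q₂ : Matrix (Fin 3) (Fin 3) ℝ)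
    (h₁s : Q₁.IsSymm) (h₁t : Q₁.trace = 0)
    (h₂s : Q₂.IsSymm) (h₂t : Q₂.trace = 0)
    (t : ℝ) (ht0 : 0 ≤ t) (ht1 : t ≤ 1) :
    ballMajumdarPotential (t • Q₁ + (1 - t) • Q₂) ≤
      (t : EReal) * ballMajumdarPotential Q₁
        + ((1 - t : ℝ) : EReal) * ballMajumdarPotential Q₂ := by
  rcases ht0.eq_or_lt with h0 | h0
  · rw [← h0]
    norm_num
  rcases ht1.eq_or_lt with h1 | h1
  · rw [h1]
    norm_num
  -- now 0 < t < 1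
  have hs0 : (0 : ℝ) < 1 - t := by linarith
  have hAnb := ballMajumdarPotential_ne_bot Q₁
  have hBnb := ballMajumdarPotential_ne_bot Q₂
  by_cases hA : ballMajumdarPotential Q₁ = ⊤
  · rw [hA, EReal.coe_mul_top_of_pos h0,
      EReal.top_add_of_ne_bot (EReal_pos_mul_ne_bot hs0 hBnb)]
    exact le_top
  by_cases hB : ballMajumdarPotential Q₂ = ⊤
  · rw [hB, EReal.coe_mul_top_of_pos hs0,
      EReal.add_top_of_ne_bot (EReal_pos_mul_ne_bot h0 hAnb)]
    exact le_top
  set a := (ballMajumdarPotential Q₁).toReal with ha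
  set b := (ballMajumdarPotential Q₂).toReal with hb
  have hA' : ((a : ℝ) : EReal) = ballMajumdarPotential Q₁ := EReal.coe_toReal hA hAnb
  have hB' : ((b : ℝ) : EReal) = ballMajumdarPotential Q₂ := EReal.coe_toReal hB hBnb
  rw [← hA', ← hB', ← EReal.coe_mul, ← EReal.coe_mul, ← EReal.coe_add]
  apply EReal_le_of_forall_add
  intro ε hε
  have hlt1 : sInf (sphereEntropy '' admissibleDensities Q₁) < ((a + ε : ℝ) : EReal) := by
    show ballMajumdarPotential Q₁ < _
    rw [← hA']
    exact_mod_cast (by linarith : a < a + ε)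
  have hlt2 : sInf (sphereEntropy '' admissibleDensities Q₂) < ((b + ε : ℝ) : EReal) := by
    show ballMajumdarPotential Q₂ < _
    rw [← hB']
    exact_mod_cast (by linarith : b < b + ε)
  obtain ⟨x, hxS, hx⟩ := sInf_lt_iff.mp hlt1
  obtain ⟨y, hyS, hy⟩ := sInf_lt_iff.mp hlt2
  obtain ⟨ρ₁, hρ₁, rfl⟩ := hxS
  obtain ⟨ρ₂, hρ₂, rfl⟩ := hyS
  have hint₁ : Integrable (fun p => ρ₁ p * Real.log (ρ₁ p)) sphereSurfaceMeasure := by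
    by_contra hc
    unfold sphereEntropy at hx
    rw [if_neg hc] at hx
    exact not_top_lt hx
  have hint₂ : Integrable (fun p => ρ₂ p * Real.log (ρ₂ p)) sphereSurfaceMeasure := by
    by_contra hc
    unfold sphereEntropy at hy
    rw [if_neg hc] at hy
    exact not_top_lt hy
  unfold sphereEntropy at hx hy
  rw [if_pos hint₁] at hx
  rw [if_pos hint₂] at hy
  rw [EReal.coe_lt_coe_iff] at hx hy
  have hkey := potential_mix_le hρ₁ hρ₂ hint₁ hint₂ ht0 ht1
  refine hkey.trans ?_
  rw [EReal.coe_le_coe_iff]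
  have m1 := mul_le_mul_of_nonneg_left hx.le ht0
  have m2 := mul_le_mul_of_nonneg_left hy.le (by linarith : (0:ℝ) ≤ 1 - t)
  nlinarith
end

section
/- Let n ≥ 1, let α > 0 with α ≠ 1, let κ : ℝ → ℝ be continuously differentiable, and let θ : ℝⁿ → [0, ∞) be twice continuously differentiable. Then at every point of ℝⁿ the pointwise identity holds: (1 + θ)^{−α} div( κ(θ) ∇θ ) = div( κ(θ) (1 + θ)^{−α} ∇θ ) + (4α/(1 − α)²) κ(θ) | ∇( (1 + θ)^{(1−α)/2} ) |². -/
/-- The partial derivative `∂_i f (x)` of a scalar function on `ℝⁿ`. -/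
noncomputable def pderiv' {n : ℕ} (i : Fin n) (f : (Fin n → ℝ) → ℝ)
    (x : Fin n → ℝ) : ℝ :=
  fderiv ℝ f x (Pi.single i 1)

/-- The divergence `div v (x) = ∑ i ∂_i v_i (x)` of a vector field on `ℝⁿ`. -/
noncomputable def diverg {n : ℕ} (v : (Fin n → ℝ) → (Fin n → ℝ))
    (x : Fin n → ℝ) : ℝ :=
  ∑ i, pderiv' i (fun y => v y i) x

/-- For `n ≥ 1`, `α > 0`, `α ≠ 1`, `κ ∈ C¹(ℝ)` and `θ ∈ C²(ℝⁿ)`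
nonnegative, at every point of `ℝⁿ`:
`(1+θ)^{-α} div(κ(θ) ∇θ)
  = div(κ(θ) (1+θ)^{-α} ∇θ) + (4α/(1-α)²) κ(θ) |∇((1+θ)^{(1-α)/2})|²`. -/
theorem temperature_gradient_identity (n : ℕ) (hn : 1 ≤ n)
    (α : ℝ) (hα : 0 < α) (hα1 : α ≠ 1)
    (κ : ℝ → ℝ) (hκ : ContDiff ℝ 1 κ)
    (θ : (Fin n → ℝ) → ℝ) (hθ : ContDiff ℝ 2 θ) (hθ0 : ∀ x, 0 ≤ θ x) :
    ∀ x : Fin n → ℝ,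
      (1 + θ x) ^ (-α) * diverg (fun y i => κ (θ y) * pderiv' i θ y) x
        = diverg (fun y i => κ (θ y) * (1 + θ y) ^ (-α) * pderiv' i θ y) x
          + (4 * α / (1 - α) ^ 2) * κ (θ x)
            * ∑ i, (pderiv' i (fun y => (1 + θ y) ^ ((1 - α) / 2)) x) ^ 2 := by
  intro x
  have ht : (0:ℝ) < 1 + θ x := by linarith [hθ0 x]
  have hθx : HasFDerivAt θ (fderiv ℝ θ x) x :=
    (hθ.differentiable two_ne_zero x).hasFDerivAt
  set Dθ := fderiv ℝ θ x with hDθ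
  set t := θ x with htdef
  set s := 1 + t with hsdef
  -- derivative of y ↦ (1 + θ y) ^ r
  have hpow : ∀ r : ℝ, HasFDerivAt (fun y => (1 + θ y) ^ r)
      ((r * s ^ (r - 1)) • Dθ) x := by
    intro r
    have h0 : HasFDerivAt (fun y => 1 + θ y) Dθ x := hθx.const_add 1
    have h1 : HasDerivAt (fun u : ℝ => u ^ r) (r * s ^ (r - 1)) s :=
      Real.hasDerivAt_rpow_const (Or.inl ht.ne')
    exact h1.comp_hasFDerivAt x h0
  -- derivative of y ↦ κ (θ y)
  have hκθ : HasFDerivAt (fun y => κ (θ y)) (deriv κ t • Dθ) x :=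
    ((hκ.differentiable one_ne_zero t).hasDerivAt).comp_hasFDerivAt x hθx
  -- derivative of the partial derivatives
  have hgd : ∀ i : Fin n, DifferentiableAt ℝ (fun y => pderiv' i θ y) x := by
    intro i
    have h2 : ContDiff ℝ 1 (fun y => fderiv ℝ θ y) :=
      hθ.fderiv_right (le_refl 2)
    exact ((h2.differentiable one_ne_zero x).clm_apply (differentiableAt_const _))
  have hg : ∀ i : Fin n, HasFDerivAt (fun y => pderiv' i θ y)
      (fderiv ℝ (fun y => pderiv' i θ y) x) x := fun i => (hgd i).hasFDerivAt
  set g : Fin n → ℝ := fun i => Dθ (Pi.single i 1) with hgdef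
  set G : Fin n → ℝ := fun i =>
    fderiv ℝ (fun y => pderiv' i θ y) x (Pi.single i 1) with hGdef
  set k := κ t with hkdef
  set k' := deriv κ t with hk'def
  -- compute the three kinds of partial derivatives
  have e1 : ∀ i : Fin n,
      pderiv' i (fun y => κ (θ y) * pderiv' i θ y) x
        = k * G i + g i * (k' * g i) := by
    intro i
    have : fderiv ℝ (fun y => κ (θ y) * pderiv' i θ y) x = _ := (hκθ.mul (hg i)).fderiv
    rw [pderiv', this]
    simp only [ContinuousLinearMap.add_apply, ContinuousLinearMap.smul_apply, smul_eq_mul]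
    rfl
  have e2 : ∀ i : Fin n,
      pderiv' i (fun y => κ (θ y) * (1 + θ y) ^ (-α) * pderiv' i θ y) x
        = (k * s ^ (-α)) * G i
          + g i * (k * (-α * s ^ (-α - 1)) * g i + s ^ (-α) * (k' * g i)) := by
    intro i
    have : fderiv ℝ (fun y => κ (θ y) * (1 + θ y) ^ (-α) * pderiv' i θ y) x = _ :=
      ((hκθ.mul (hpow (-α))).mul (hg i)).fderiv
    rw [pderiv', this]
    simp only [ContinuousLinearMap.add_apply, ContinuousLinearMap.smul_apply, smul_eq_mul]
    show (κ t * s ^ (-α)) * G i + g i * (κ t * ((-α * s ^ (-α - 1)) * g i) + s ^ (-α) * (k' * g i)) = _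
    ring
  have e3 : ∀ i : Fin n,
      pderiv' i (fun y => (1 + θ y) ^ ((1 - α) / 2)) x
        = ((1 - α) / 2 * s ^ ((1 - α) / 2 - 1)) * g i := by
    intro i
    have := (hpow ((1 - α) / 2)).fderiv
    rw [pderiv', this]
    simp [ContinuousLinearMap.smul_apply]
    exact Or.inl rfl
  rw [diverg, diverg]
  simp only [e1, e2, e3]
  rw [Finset.mul_sum, Finset.mul_sum, ← Finset.sum_add_distrib]
  refine Finset.sum_congr rfl fun i _ => ?_
  have h1α : (1 : ℝ) - α ≠ 0 := sub_ne_zero.mpr (Ne.symm hα1)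
  have hcc : s ^ ((1 - α) / 2 - 1) * s ^ ((1 - α) / 2 - 1) = s ^ (-α - 1) := by
    rw [← Real.rpow_add ht]; congr 1; ring
  have hlast : (((1 - α) / 2 * s ^ ((1 - α) / 2 - 1)) * g i) ^ 2
      = (1 - α) ^ 2 / 4 * s ^ (-α - 1) * g i ^ 2 := by
    rw [← hcc]; ring
  rw [hlast]
  field_simp
  ring
end

section
/- Let (X, μ) be a finite measure space, let K ≥ 0, and let (f_m)_{m ∈ ℕ} be a nondecreasing sequence of continuous functions f_m : ℝ^d → [−K, ∞) converging pointwise to a function f : ℝ^d → [−K, +∞]. Let g_m : X → ℝ^d be measurable with g_m → g μ-almost everywhere, and suppose there is c ∈ ℝ with ∫_X f_m(g_m(x)) dμ(x) ≤ c for all m. Then f ∘ g is integrable in the extended sense and ∫_X f(g(x)) dμ(x) ≤ c. -/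
open MeasureTheory Filter

attribute [local instance] Classical.propDecidable

/-- The canonical map `EReal → ℝ≥0∞` sending `+∞` to `∞` and every `x ≤ 0` to `0`;
used to express integrals of functions with values in `(-∞, +∞]` after shifting them
to be nonnegative. -/
noncomputable def erealToENNReal (x : EReal) : ENNReal :=
  if x = ⊤ then ⊤ else ENNReal.ofReal x.toReal

/-- Let `(X, μ)` be a finite measure space, `K ≥ 0`, and let
`(f_m)` be a nondecreasing sequence of continuous functions `ℝ^d → [-K, ∞)` converging
pointwise to `F : ℝ^d → [-K, +∞]`.  Let `g_m : X → ℝ^d` be measurable with `g_m → G`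
`μ`-a.e., and suppose `∫ f_m(g_m) dμ ≤ c` for all `m` (the extended-sense integral of
a function `h ≥ -K` being encoded by `∫⁻ (h + K) dμ ≤ c + K μ(X)`).  Then `F ∘ G` is
integrable in the extended sense with `∫ F(G x) dμ ≤ c`, i.e.
`∫⁻ (F(G x) + K) dμ ≤ c + K μ(X)`. -/
theorem fatou_singular_potential {X : Type*} [MeasurableSpace X]
    (μ : Measure X) [IsFiniteMeasure μ]
    {d : ℕ} (K : ℝ) (hK : 0 ≤ K)
    (f : ℕ → (Fin d → ℝ) → ℝ)
    (hfc : ∀ m, Continuous (f m))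
    (hflb : ∀ m y, -K ≤ f m y)
    (hmono : ∀ m y, f m y ≤ f (m + 1) y)
    (F : (Fin d → ℝ) → EReal)
    (hconv : ∀ y, Tendsto (fun m => ((f m y : ℝ) : EReal)) atTop (nhds (F y)))
    (g : ℕ → X → (Fin d → ℝ)) (hg : ∀ m, Measurable (g m))
    (G : X → (Fin d → ℝ)) (hG : Measurable G)
    (hae : ∀ᵐ x ∂μ, Tendsto (fun m => g m x) atTop (nhds (G x)))
    (c : ℝ)
    (hint : ∀ m, ∫⁻ x, ENNReal.ofReal (f m (g m x) + K) ∂μ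
      ≤ ENNReal.ofReal (c + K * (μ Set.univ).toReal)) :
    ∫⁻ x, erealToENNReal (F (G x) + (K : EReal)) ∂μ
      ≤ ENNReal.ofReal (c + K * (μ Set.univ).toReal) := by
  set B := ENNReal.ofReal (c + K * (μ Set.univ).toReal) with hB
  have hmono' : ∀ y, Monotone (fun m => f m y) :=
    fun y => monotone_nat_of_le_succ (fun m => hmono m y)
  -- pointwise bound
  have hpt : ∀ y, erealToENNReal (F y + (K : EReal))
      ≤ ⨆ m, ENNReal.ofReal (f m y + K) := by
    intro y
    have h := hconv y
    cases hE : F y with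
    | bot =>
      have : (⊥ : EReal) + (K : EReal) = ⊥ := by
        simp
      rw [this]
      simp [erealToENNReal]
    | top =>
      rw [hE] at h
      have htop : Tendsto (fun m => f m y) atTop atTop := by
        rw [EReal.tendsto_nhds_top_iff_real] at h
        rw [tendsto_atTop_atTop]
        intro b
        rcases ((h b).and ((h b))).exists_forall_of_atTop with ⟨N, hN⟩
        exact ⟨N, fun n hn => le_of_lt (by exact_mod_cast (hN n hn).1)⟩
      have htop' : Tendsto (fun m => ENNReal.ofReal (f m y + K)) atTop (nhds ⊤) :=
        ENNReal.tendsto_ofReal_atTop.comp (tendsto_atTop_add_const_right _ K htop)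
      have : (⊤ : ENNReal) ≤ ⨆ m, ENNReal.ofReal (f m y + K) :=
        le_of_tendsto' htop' (fun m => le_iSup (fun m => ENNReal.ofReal (f m y + K)) m)
      refine le_trans ?_ this
      exact le_top
    | coe a =>
      rw [hE] at h
      have hra : Tendsto (fun m => f m y) atTop (nhds a) := by
        rwa [EReal.tendsto_coe] at h
      have hten : Tendsto (fun m => ENNReal.ofReal (f m y + K)) atTop
          (nhds (ENNReal.ofReal (a + K))) :=
        (ENNReal.continuous_ofReal.tendsto _).comp
          (hra.add_const K)
      have hle : ENNReal.ofReal (a + K) ≤ ⨆ m, ENNReal.ofReal (f m y + K) :=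
        le_of_tendsto' hten (fun m => le_iSup (fun m => ENNReal.ofReal (f m y + K)) m)
      have : (a : EReal) + (K : EReal) = ((a + K : ℝ) : EReal) := by
        exact_mod_cast (EReal.coe_add a K).symm
      have h2 : erealToENNReal ((a + K : ℝ) : EReal) = ENNReal.ofReal (a + K) := by
        simp only [erealToENNReal, EReal.coe_ne_top, if_false, EReal.toReal_coe]
      rw [this, h2]
      exact hle
  -- measurability
  have hmeasG : ∀ m, Measurable (fun x => ENNReal.ofReal (f m (G x) + K)) :=
    fun m => (((hfc m).measurable.comp hG).add_const K).ennreal_ofReal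
  have hmeasg : ∀ m n, Measurable (fun x => ENNReal.ofReal (f m (g n x) + K)) :=
    fun m n => (((hfc m).measurable.comp (hg n)).add_const K).ennreal_ofReal
  -- each approximation along G is bounded by B
  have key : ∀ m, ∫⁻ x, ENNReal.ofReal (f m (G x) + K) ∂μ ≤ B := by
    intro m
    have hcong : ∀ᵐ x ∂μ, ENNReal.ofReal (f m (G x) + K)
        = Filter.liminf (fun n => ENNReal.ofReal (f m (g n x) + K)) atTop := by
      filter_upwards [hae] with x hx
      have : Tendsto (fun n => ENNReal.ofReal (f m (g n x) + K)) atTop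
          (nhds (ENNReal.ofReal (f m (G x) + K))) :=
        (ENNReal.continuous_ofReal.tendsto _).comp
          ((((hfc m).tendsto _).comp hx).add_const K)
      exact this.liminf_eq.symm
    rw [lintegral_congr_ae hcong]
    calc ∫⁻ x, Filter.liminf (fun n => ENNReal.ofReal (f m (g n x) + K)) atTop ∂μ
        ≤ Filter.liminf (fun n => ∫⁻ x, ENNReal.ofReal (f m (g n x) + K) ∂μ) atTop :=
          lintegral_liminf_le (fun n => hmeasg m n)
      _ ≤ B := by
          have hev : ∀ᶠ n in atTop,
              ∫⁻ x, ENNReal.ofReal (f m (g n x) + K) ∂μ ≤ B := by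
            filter_upwards [eventually_ge_atTop m] with n hn
            calc ∫⁻ x, ENNReal.ofReal (f m (g n x) + K) ∂μ
                ≤ ∫⁻ x, ENNReal.ofReal (f n (g n x) + K) ∂μ :=
                  lintegral_mono (fun x => ENNReal.ofReal_le_ofReal
                    (add_le_add_left (hmono' _ hn) K))
              _ ≤ B := hint n
          calc Filter.liminf (fun n => ∫⁻ x, ENNReal.ofReal (f m (g n x) + K) ∂μ) atTop
              ≤ Filter.liminf (fun _ : ℕ => B) atTop := Filter.liminf_le_liminf hev
            _ = B := Filter.liminf_const B
  calc ∫⁻ x, erealToENNReal (F (G x) + (K : EReal)) ∂μ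
      ≤ ∫⁻ x, ⨆ m, ENNReal.ofReal (f m (G x) + K) ∂μ :=
        lintegral_mono (fun x => hpt (G x))
    _ = ⨆ m, ∫⁻ x, ENNReal.ofReal (f m (G x) + K) ∂μ :=
        lintegral_iSup hmeasG (fun a b hab x =>
          ENNReal.ofReal_le_ofReal (add_le_add_left (hmono' _ hab) K))
    _ ≤ B := iSup_le key
end
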